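/- arXiv:1711.07100 — 3 statements merged into one kernel-verified Lean document; each statement's English description precedes it below -/
import Mathlib

section
/- Let M_{n,k} be the generalized Motzkin numbers obtained from the choices σ_k = 0 (for all k ≥ 0) and τ_k = −k² (for all k ≥ 1). Then for every n ≥ 0, M_{n,0} = E_n, the n-th Euler number. In particular, each M_{n,0} is an integer, M_{n,0} = 0 for odd n, and the nonzero values alternate in sign. -/
noncomputable section Stmt14Aux
open PowerSeries Finset Filter

def st14γ (q : ℕ) : ℝ := if Even q then (1:ℝ)/q.factorial else 0

def st14Ch : PowerSeries ℝ := PowerSeries.mk st14γ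
def st14Sh : PowerSeries ℝ := PowerSeries.mk fun n => if Even n then 0 else (1:ℝ)/n.factorial

lemma st14_coeff_Ch (n : ℕ) : coeff n st14Ch = st14γ n := coeff_mk _ _
lemma st14_coeff_Sh (n : ℕ) :
    coeff n st14Sh = if Even n then 0 else (1:ℝ)/n.factorial := coeff_mk _ _

lemma st14_ccCh : constantCoeff st14Ch = 1 := by
  rw [← coeff_zero_eq_constantCoeff, st14_coeff_Ch]; simp [st14γ]

lemma st14_ccSh : constantCoeff st14Sh = 0 := by
  rw [← coeff_zero_eq_constantCoeff, st14_coeff_Sh]; simp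

lemma st14_Ch_mul_inv : st14Ch * st14Ch⁻¹ = 1 :=
  PowerSeries.mul_inv_cancel _ (by rw [st14_ccCh]; norm_num)

lemma st14_fact_step (n : ℕ) : (1:ℝ)/(n+1).factorial * (n+1) = 1/n.factorial := by
  have h1 : ((n+1).factorial : ℝ) ≠ 0 := Nat.cast_ne_zero.2 (n+1).factorial_ne_zero
  have h2 : (n.factorial : ℝ) ≠ 0 := Nat.cast_ne_zero.2 n.factorial_ne_zero
  rw [Nat.factorial_succ]
  push_cast
  field_simp

lemma st14_dCh : d⁄dX ℝ st14Ch = st14Sh := by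
  ext n
  rw [coeff_derivative, st14_coeff_Ch, st14_coeff_Sh, st14γ]
  rcases Nat.even_or_odd n with h | h
  · rw [if_neg (fun hc => (Nat.even_add_one.mp hc) h), if_pos h, zero_mul]
  · have he : Even (n+1) := Nat.even_add_one.mpr (Nat.not_even_iff_odd.mpr h)
    rw [if_pos he, if_neg (Nat.not_even_iff_odd.mpr h)]
    exact st14_fact_step n

lemma st14_dSh : d⁄dX ℝ st14Sh = st14Ch := by
  ext n
  rw [coeff_derivative, st14_coeff_Ch, st14_coeff_Sh, st14γ]
  rcases Nat.even_or_odd n with h | h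
  · rw [if_neg (fun hc => (Nat.even_add_one.mp hc) h), if_pos h]
    exact st14_fact_step n
  · have he : Even (n+1) := Nat.even_add_one.mpr (Nat.not_even_iff_odd.mpr h)
    rw [if_pos he, if_neg (Nat.not_even_iff_odd.mpr h), zero_mul]

lemma st14_dChinv : d⁄dX ℝ (st14Ch⁻¹) = -(st14Sh * st14Ch⁻¹^2) := by
  have h0 : d⁄dX ℝ (st14Ch * st14Ch⁻¹) = 0 := by
    rw [st14_Ch_mul_inv]; exact Derivation.map_one_eq_zero _
  rw [Derivation.leibniz, smul_eq_mul, smul_eq_mul, st14_dCh] at h0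
  linear_combination st14Ch⁻¹ * h0 - (d⁄dX ℝ st14Ch⁻¹) * st14_Ch_mul_inv

def st14u (k : ℕ) : PowerSeries ℝ := st14Ch⁻¹^(k+1) * st14Sh^k

lemma st14_du0 : d⁄dX ℝ (st14u 0) = -(st14u 1) := by
  simp only [st14u, zero_add, pow_zero, pow_one, mul_one]
  rw [st14_dChinv]
  ring

lemma st14_du (k : ℕ) : d⁄dX ℝ (st14u (k+1)) =
    C ((k:ℝ)+1) * st14u k - C ((k:ℝ)+2) * st14u (k+2) := by
  have hC1 : C ((k:ℝ)+1) = ((k : PowerSeries ℝ)+1) := by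
    rw [map_add, map_natCast, map_one]
  have hC2 : C ((k:ℝ)+2) = ((k : PowerSeries ℝ)+2) := by
    rw [map_add, map_natCast, map_ofNat]
  have e1 : d⁄dX ℝ (st14Sh^(k+1)) = ((k:PowerSeries ℝ)+1) * st14Sh^k * st14Ch := by
    rw [Derivation.leibniz_pow, nsmul_eq_mul, smul_eq_mul, st14_dSh]
    push_cast; ring
  have e2 : d⁄dX ℝ (st14Ch⁻¹^(k+2)) =
      ((k:PowerSeries ℝ)+2) * st14Ch⁻¹^(k+1) * -(st14Sh * st14Ch⁻¹^2) := by
    rw [Derivation.leibniz_pow, nsmul_eq_mul, smul_eq_mul, st14_dChinv]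
    push_cast; ring
  show d⁄dX ℝ (st14Ch⁻¹^(k+2) * st14Sh^(k+1)) = _
  rw [Derivation.leibniz, smul_eq_mul, smul_eq_mul, e1, e2, hC1, hC2]
  simp only [st14u]
  linear_combination (((k:PowerSeries ℝ)+1) * st14Sh^k * st14Ch⁻¹^(k+1)) * st14_Ch_mul_inv

/-- The power-series model of the Motzkin triangle. -/
def st14M (n k : ℕ) : ℝ := (n.factorial : ℝ) / k.factorial * coeff n (st14u k)

lemma st14M00 : st14M 0 0 = 1 := by
  simp only [st14M, st14u, pow_zero, pow_one, mul_one, zero_add, Nat.factorial_zero]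
  rw [coeff_zero_eq_constantCoeff, PowerSeries.constantCoeff_inv, st14_ccCh]
  norm_num

lemma st14Mhigh (n k : ℕ) (h : n < k) : st14M n k = 0 := by
  have hX : (X:PowerSeries ℝ)^k ∣ st14u k :=
    Dvd.dvd.mul_left (pow_dvd_pow_of_dvd (PowerSeries.X_dvd_iff.mpr st14_ccSh) k) _
  rw [st14M, PowerSeries.X_pow_dvd_iff.mp hX n h, mul_zero]

lemma st14M0 (n : ℕ) : st14M (n+1) 0 = -(st14M n 1) := by
  have hc : coeff (n+1) (st14u 0) * ((n:ℝ)+1) = -(coeff n (st14u 1)) := by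
    have := coeff_derivative (st14u 0) n
    rw [st14_du0, map_neg] at this
    push_cast at this
    linarith [this]
  have hn : ((n:ℝ)+1) ≠ 0 := by positivity
  have hc2 : coeff (n+1) (st14u 0) = -(coeff n (st14u 1))/((n:ℝ)+1) := by
    rw [eq_div_iff hn]; exact hc
  have h1 : ((n+1).factorial : ℝ) = ((n:ℝ)+1) * n.factorial := by
    rw [Nat.factorial_succ]; push_cast; ring
  have hf : (n.factorial : ℝ) ≠ 0 := Nat.cast_ne_zero.2 n.factorial_ne_zero
  rw [st14M, st14M, hc2, h1]
  field_simp
  ring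

lemma st14Mk (n k : ℕ) : st14M (n+1) (k+1) =
    st14M n k - ((k:ℝ)+2)^2 * st14M n (k+2) := by
  simp only [st14M]
  set a := coeff n (st14u k)
  set b := coeff n (st14u (k+2))
  set c := coeff (n+1) (st14u (k+1))
  have hc : c * ((n:ℝ)+1) = (((k:ℝ)+1) * a - ((k:ℝ)+2) * b) := by
    have := coeff_derivative (st14u (k+1)) n
    rw [st14_du k, map_sub, coeff_C_mul, coeff_C_mul] at this
    push_cast at this
    linarith [this]
  have hn : ((n:ℝ)+1) ≠ 0 := by positivity
  have hc2 : c = (((k:ℝ)+1) * a - ((k:ℝ)+2) * b)/((n:ℝ)+1) := by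
    rw [eq_div_iff hn]; exact hc
  have h1 : ((n+1).factorial : ℝ) = ((n:ℝ)+1) * n.factorial := by
    rw [Nat.factorial_succ]; push_cast; ring
  have h2 : ((k+1).factorial : ℝ) = ((k:ℝ)+1) * k.factorial := by
    rw [Nat.factorial_succ]; push_cast; ring
  have h3 : ((k+2).factorial : ℝ) = ((k:ℝ)+2) * (((k:ℝ)+1) * k.factorial) := by
    show (((k+1)+1).factorial : ℝ) = _
    rw [Nat.factorial_succ, Nat.factorial_succ]; push_cast; ring
  have hf : (n.factorial : ℝ) ≠ 0 := Nat.cast_ne_zero.2 n.factorial_ne_zero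
  have hg : (k.factorial : ℝ) ≠ 0 := Nat.cast_ne_zero.2 k.factorial_ne_zero
  have hk1 : ((k:ℝ)+1) ≠ 0 := by positivity
  have hk2 : ((k:ℝ)+2) ≠ 0 := by positivity
  rw [hc2, h1, h2, h3]
  field_simp

/-- Any triangle satisfying the hypotheses agrees with the model. -/
lemma st14_M_unique (M : ℕ → ℕ → ℝ)
    (hM00 : M 0 0 = 1)
    (hMhigh : ∀ n k : ℕ, n < k → M n k = 0)
    (hM0 : ∀ n : ℕ, M (n + 1) 0 = 0 * M n 0 + (-((1 : ℝ) ^ 2)) * M n 1)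
    (hMk : ∀ n k : ℕ, M (n + 1) (k + 1) =
      M n k + 0 * M n (k + 1) + (-(((k : ℝ) + 2) ^ 2)) * M n (k + 2)) :
    ∀ n k, M n k = st14M n k := by
  intro n
  induction n with
  | zero =>
    intro k
    match k with
    | 0 => rw [hM00, st14M00]
    | (k+1) => rw [hMhigh 0 (k+1) (Nat.succ_pos k), st14Mhigh 0 (k+1) (Nat.succ_pos k)]
  | succ n ih =>
    intro k
    match k with
    | 0 =>
      rw [hM0 n, st14M0 n, ih 1]
      ring
    | (k+1) =>
      rw [hMk n k, st14Mk n k, ih k, ih (k+1), ih (k+2)]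
      ring

section Analytic

lemma st14_unique {α β : ℕ → ℂ} {f : ℂ → ℂ} {ε : ℝ} (hε : 0 < ε)
    (hα : ∀ z : ℂ, ‖z‖ < ε → HasSum (fun n => α n * z ^ n) (f z))
    (hβ : ∀ z : ℂ, ‖z‖ < ε → HasSum (fun n => β n * z ^ n) (f z)) : α = β := by
  have key : ∀ (c : ℕ → ℂ), (∀ z : ℂ, ‖z‖ < ε → HasSum (fun n => c n * z ^ n) (f z)) →
      HasFPowerSeriesAt f (FormalMultilinearSeries.ofScalars ℂ c) 0 := by
    intro c hc
    rw [hasFPowerSeriesAt_iff]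
    filter_upwards [Metric.ball_mem_nhds (0:ℂ) hε] with z hz
    have hz' : ‖z‖ < ε := by simpa [Metric.mem_ball, dist_zero_right] using hz
    have := hc z hz'
    simp only [zero_add]
    convert this using 2 with n
    show z ^ n • (FormalMultilinearSeries.ofScalars ℂ c n) (fun _ => 1) = c n * z ^ n
    rw [FormalMultilinearSeries.ofScalars_apply_eq]
    simp [mul_comm]
    rfl
  have h := (key α hα).eq_formalMultilinearSeries (key β hβ)
  exact FormalMultilinearSeries.ofScalars_series_injective ℂ ℂ h

lemma st14_conv (E : ℕ → ℝ)
    (hE : ∀ z : ℂ, ‖z‖ < 1 → HasSum (fun n : ℕ => (E n : ℂ) * z ^ n / (n.factorial : ℂ))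
        (2 / (Complex.exp z + Complex.exp (-z)))) :
    ∀ n : ℕ, (∑ kl ∈ antidiagonal n, (E kl.1/kl.1.factorial) * st14γ kl.2)
      = if n = 0 then 1 else 0 := by
  have hhalf : ‖(((1:ℝ)/2 : ℝ) : ℂ)‖ < 1 := by
    rw [Complex.norm_real, Real.norm_eq_abs, abs_of_pos] <;> norm_num
  obtain ⟨K, hK⟩ := ((hE _ hhalf).summable.tendsto_atTop_zero.norm).bddAbove_range
  simp only [mem_upperBounds, Set.mem_range, forall_exists_index] at hK
  have hKb : ∀ n : ℕ, ‖(E n : ℂ) * (((1:ℝ)/2 : ℝ) : ℂ)^n / (n.factorial : ℂ)‖ ≤ K :=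
    fun n => hK _ n rfl
  set A : ℕ → ℂ := fun n => ∑ kl ∈ antidiagonal n,
      ((E kl.1 : ℂ)/kl.1.factorial) * ((1 + (-1)^kl.2)/kl.2.factorial) with hA
  set B : ℕ → ℂ := fun n => if n = 0 then (2:ℂ) else 0 with hB
  have hAB : A = B := by
    apply st14_unique (f := fun _ => (2:ℂ)) (ε := 1/4) (by norm_num)
    · intro z hz
      set f : ℕ → ℂ := fun n => (E n : ℂ) * z^n / n.factorial with hf
      set g : ℕ → ℂ := fun n => z^n/n.factorial + (-z)^n/n.factorial with hg
      have hfs : HasSum f (2 / (Complex.exp z + Complex.exp (-z))) :=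
        hE z (by linarith)
      have hfn : Summable (fun n => ‖f n‖) := by
        apply Summable.of_nonneg_of_le (fun n => norm_nonneg _)
          (fun n => ?_) ((summable_geometric_of_lt_one (by positivity)
            (show 2*‖z‖ < 1 by linarith)).mul_left K)
        have e1 : ‖f n‖ = (|E n| / n.factorial) * ‖z‖^n := by
          simp only [hf, norm_div, norm_mul, norm_pow, Complex.norm_real,
            Real.norm_eq_abs, Complex.norm_natCast]
          ring
        have e2 : ‖(E n : ℂ) * (((1:ℝ)/2 : ℝ) : ℂ)^n / (n.factorial : ℂ)‖
            = (|E n| / n.factorial) * (1/2)^n := by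
          simp only [norm_div, norm_mul, norm_pow, Complex.norm_real,
            Real.norm_eq_abs, Complex.norm_natCast]
          rw [show |(1:ℝ)| = 1 from abs_one, show |(2:ℝ)| = 2 by norm_num]
          ring
        have e3 : ‖z‖^n = (1/2)^n * (2*‖z‖)^n := by
          rw [← mul_pow]
          congr 1
          ring
        rw [e1, e3]
        calc |E n| / n.factorial * ((1/2)^n * (2*‖z‖)^n)
            = (|E n| / n.factorial * (1/2)^n) * (2*‖z‖)^n := by ring
          _ ≤ K * (2*‖z‖)^n := by
              apply mul_le_mul_of_nonneg_right _ (by positivity)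
              rw [← e2]; exact hKb n
      have hgs : HasSum g (Complex.exp z + Complex.exp (-z)) := by
        rw [Complex.exp_eq_exp_ℂ]
        exact (NormedSpace.expSeries_div_hasSum_exp z).add
          (NormedSpace.expSeries_div_hasSum_exp (-z))
      have hgn : Summable (fun n => ‖g n‖) := by
        apply Summable.of_nonneg_of_le (fun n => norm_nonneg _) (fun n => ?_)
          ((Real.summable_pow_div_factorial ‖z‖).mul_left 2)
        calc ‖g n‖ ≤ ‖z^n/(n.factorial:ℂ)‖ + ‖(-z)^n/(n.factorial:ℂ)‖ := norm_add_le _ _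
        _ = 2 * (‖z‖^n / n.factorial) := by
            simp [norm_div, norm_pow, Complex.norm_natCast]; ring
      have hne : Complex.exp z + Complex.exp (-z) ≠ 0 := by
        have him : |z.im| < 1/4 := lt_of_le_of_lt (Complex.abs_im_le_norm z) (by
          exact hz)
        obtain ⟨him1, him2⟩ := abs_lt.mp him
        have hpi := Real.pi_gt_three
        have hcos : 0 < Real.cos z.im :=
          Real.cos_pos_of_mem_Ioo ⟨by linarith, by linarith⟩
        have hre : 0 < (Complex.exp z + Complex.exp (-z)).re := by
          rw [Complex.add_re, Complex.exp_re, Complex.exp_re]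
          simp only [Complex.neg_re, Complex.neg_im, Real.cos_neg]
          positivity
        intro h
        rw [h] at hre
        simp at hre
      have htsum := tsum_mul_tsum_eq_tsum_sum_antidiagonal_of_summable_norm hfn hgn
      rw [hfs.tsum_eq, hgs.tsum_eq, div_mul_cancel₀ _ hne] at htsum
      have hS : HasSum (fun n => ∑ kl ∈ antidiagonal n, f kl.1 * g kl.2) 2 := by
        have hsum := (summable_norm_sum_mul_antidiagonal_of_summable_norm hfn hgn).of_norm
        rw [Summable.hasSum_iff hsum, ← htsum]
      have hcong : (fun n => ∑ kl ∈ antidiagonal n, f kl.1 * g kl.2)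
          = fun n => A n * z^n := by
        funext n
        rw [hA, Finset.sum_mul]
        apply Finset.sum_congr rfl
        rintro ⟨k, m⟩ hkl
        have hn : k + m = n := Finset.HasAntidiagonal.mem_antidiagonal.mp hkl
        simp only [hf, hg]
        rw [← hn, pow_add, neg_pow]
        ring
      exact hcong ▸ hS
    · intro z hz
      have : (fun n => B n * z^n) = fun n => if n = 0 then (2:ℂ) else 0 := by
        funext n
        by_cases h : n = 0 <;> simp [hB, h]
      rw [this]
      exact hasSum_ite_eq 0 2
  intro n
  have h := congrFun hAB n
  have hterm : ∀ m : ℕ, ((1:ℂ) + (-1)^m)/m.factorial = ((2 * st14γ m : ℝ) : ℂ) := by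
    intro m
    rcases Nat.even_or_odd m with hm | hm
    · rw [st14γ, if_pos hm, hm.neg_one_pow]
      push_cast; ring
    · rw [st14γ, if_neg (by simpa [Nat.not_even_iff_odd] using hm), hm.neg_one_pow]
      push_cast; ring
  have hAr : A n = (((2:ℝ) * ∑ kl ∈ antidiagonal n,
      (E kl.1/kl.1.factorial) * st14γ kl.2 : ℝ) : ℂ) := by
    rw [hA, Finset.mul_sum]
    push_cast
    apply Finset.sum_congr rfl
    rintro ⟨k, m⟩ -
    have := hterm m
    push_cast at this
    rw [this]
    ring
  have hBr : B n = (((if n = 0 then (2:ℝ) else 0) : ℝ) : ℂ) := by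
    rw [hB]; by_cases hn0 : n = 0 <;> simp [hn0]
  rw [hAr, hBr, Complex.ofReal_inj] at h
  split_ifs at h ⊢ <;> linarith

end Analytic

lemma st14_conv_Ch (n : ℕ) :
    (∑ kl ∈ antidiagonal n, coeff kl.1 st14Ch⁻¹ * st14γ kl.2)
      = if n = 0 then 1 else 0 := by
  have h : coeff n (st14Ch⁻¹ * st14Ch) = coeff n 1 := by
    rw [mul_comm, st14_Ch_mul_inv]
  rw [PowerSeries.coeff_mul, PowerSeries.coeff_one] at h
  rw [← h]
  apply Finset.sum_congr rfl
  rintro ⟨k, m⟩ -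
  rw [st14_coeff_Ch]

lemma st14_γ0 : st14γ 0 = 1 := by simp [st14γ]

lemma st14_conv_unique (x y : ℕ → ℝ)
    (hx : ∀ n, (∑ kl ∈ antidiagonal n, x kl.1 * st14γ kl.2) = if n = 0 then 1 else 0)
    (hy : ∀ n, (∑ kl ∈ antidiagonal n, y kl.1 * st14γ kl.2) = if n = 0 then 1 else 0) :
    ∀ n, x n = y n := by
  intro n
  induction n using Nat.strong_induction_on with
  | _ n ih =>
    have hx' := hx n
    have hy' := hy n
    rw [Finset.Nat.sum_antidiagonal_eq_sum_range_succ_mk, Finset.sum_range_succ,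
      Nat.sub_self, st14_γ0, mul_one] at hx' hy'
    have hsum : ∑ i ∈ Finset.range n, x i * st14γ (n - i)
        = ∑ i ∈ Finset.range n, y i * st14γ (n - i) := by
      apply Finset.sum_congr rfl
      intro i hi
      rw [ih i (Finset.mem_range.mp hi)]
    linarith [hx', hy', hsum.symm.le, hsum.le]

lemma st14M_col0 (E : ℕ → ℝ)
    (hE : ∀ z : ℂ, ‖z‖ < 1 → HasSum (fun n : ℕ => (E n : ℂ) * z ^ n / (n.factorial : ℂ))
        (2 / (Complex.exp z + Complex.exp (-z)))) :
    ∀ n : ℕ, st14M n 0 = E n := by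
  have hconv := st14_conv E hE
  have hx : ∀ n, E n / n.factorial = coeff n st14Ch⁻¹ :=
    st14_conv_unique (fun n => E n / n.factorial) (fun n => coeff n st14Ch⁻¹)
      hconv st14_conv_Ch
  intro n
  have hf : (n.factorial : ℝ) ≠ 0 := Nat.cast_ne_zero.2 n.factorial_ne_zero
  rw [st14M, st14u]
  simp only [zero_add, pow_one, pow_zero, mul_one, Nat.factorial_zero]
  rw [← hx n]
  field_simp
  simp

end Stmt14Aux

/-- the generalized Motzkin numbers built from `σ_k = 0` and
`τ_k = -k²` satisfy `M_{n,0} = E_n`, the Euler numbers (EGF `sech z`).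
In particular each `M_{n,0}` is an integer, `M_{n,0} = 0` for odd `n`, and the
(nonzero) even-indexed values alternate in sign: `(-1)^j M_{2j,0} > 0`.
The Motzkin recurrence `M_{n+1,k} = M_{n,k-1} + σ_k M_{n,k} + τ_{k+1} M_{n,k+1}`
(with `M_{n,k} = 0` for `k < 0` or `k > n`) is encoded with natural-number
indices: the `k = 0` case drops the `M_{n,-1}` term. -/
theorem stmt_14
    (E : ℕ → ℝ)
    (hE : ∀ z : ℂ, ‖z‖ < 1 →
      HasSum (fun n : ℕ => (E n : ℂ) * z ^ n / (n.factorial : ℂ))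
        (2 / (Complex.exp z + Complex.exp (-z))))
    (M : ℕ → ℕ → ℝ)
    (hM00 : M 0 0 = 1)
    (hMhigh : ∀ n k : ℕ, n < k → M n k = 0)
    (hM0 : ∀ n : ℕ, M (n + 1) 0 =
      0 * M n 0 + (-((1 : ℝ) ^ 2)) * M n 1)
    (hMk : ∀ n k : ℕ, M (n + 1) (k + 1) =
      M n k + 0 * M n (k + 1) + (-(((k : ℝ) + 2) ^ 2)) * M n (k + 2)) :
    (∀ n : ℕ, M n 0 = E n) ∧
    (∀ n : ℕ, ∃ z : ℤ, M n 0 = (z : ℝ)) ∧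
    (∀ n : ℕ, Odd n → M n 0 = 0) ∧
    (∀ j : ℕ, 0 < (-1 : ℝ) ^ j * M (2 * j) 0) := by
  have hMeq := st14_M_unique M hM00 hMhigh hM0 hMk
  -- integrality
  have hint : ∀ n k : ℕ, ∃ z : ℤ, M n k = (z : ℝ) := by
    intro n
    induction n with
    | zero =>
      intro k
      match k with
      | 0 => exact ⟨1, by rw [hM00]; norm_num⟩
      | (k+1) => exact ⟨0, by rw [hMhigh 0 (k+1) (Nat.succ_pos k)]; norm_num⟩
    | succ n ih =>
      intro k
      match k with
      | 0 =>
        obtain ⟨z, hz⟩ := ih 1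
        exact ⟨-z, by rw [hM0 n, hz]; push_cast; ring⟩
      | (k+1) =>
        obtain ⟨z1, hz1⟩ := ih k
        obtain ⟨z2, hz2⟩ := ih (k+2)
        exact ⟨z1 - ((k:ℤ)+2)^2 * z2, by rw [hMk n k, hz1, hz2]; push_cast; ring⟩
  -- vanishing for odd n + k
  have hodd : ∀ n k : ℕ, (n + k) % 2 = 1 → M n k = 0 := by
    intro n
    induction n with
    | zero =>
      intro k hk
      rcases k with _ | k
      · simp at hk
      · exact hMhigh 0 (k+1) (Nat.succ_pos k)
    | succ n ih =>
      intro k hk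
      match k with
      | 0 =>
        rw [hM0 n, ih 1 (by omega)]
        ring
      | (k+1) =>
        rw [hMk n k, ih k (by omega), ih (k+2) (by omega)]
        ring
  -- positivity
  have hpos : ∀ n k j : ℕ, n = k + 2*j → 0 < (-1:ℝ)^j * M n k := by
    intro n
    induction n with
    | zero =>
      intro k j h
      have hk : k = 0 := by omega
      have hj : j = 0 := by omega
      rw [hk, hj, hM00]
      norm_num
    | succ n ih =>
      intro k j h
      match k with
      | 0 =>
        have hj : 1 ≤ j := by omega
        obtain ⟨j', rfl⟩ : ∃ j', j = j' + 1 := ⟨j - 1, by omega⟩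
        have hn : n = 1 + 2*j' := by omega
        have := ih 1 j' hn
        rw [hM0 n]
        rw [pow_succ]
        calc (0:ℝ) < (-1)^j' * M n 1 := this
          _ = (-1)^j' * -1 * (0 * M n 0 + -1^2 * M n 1) := by ring
      | (k+1) =>
        rcases j with _ | j'
        · -- j = 0 : n = k
          have hn : n = k := by omega
          have h1 : M n (k+2) = 0 := hMhigh n (k+2) (by omega)
          have h2 := ih k 0 (by omega)
          rw [hMk n k, h1]
          simpa using h2
        · have hn : n = (k+2) + 2*j' := by omega
          have h1 := ih (k+2) j' hn
          have h2 := ih k (j'+1) (by omega)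
          rw [hMk n k]
          have expand : (-1:ℝ)^(j'+1) * (M n k + 0 * M n (k+1) + -((k:ℝ)+2)^2 * M n (k+2))
              = (-1)^(j'+1) * M n k + ((k:ℝ)+2)^2 * ((-1)^j' * M n (k+2)) := by
            rw [pow_succ]
            ring
          rw [expand]
          have hk2 : (0:ℝ) < ((k:ℝ)+2)^2 := by positivity
          nlinarith
  -- Euler numbers
  have hEuler : ∀ n : ℕ, M n 0 = E n := fun n =>
    (hMeq n 0).trans (st14M_col0 E hE n)
  exact ⟨hEuler, fun n => hint n 0, fun n hn => hodd n 0 (by rw [Nat.odd_iff] at hn; omega),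
    fun j => hpos (2*j) 0 j (by omega)⟩
end

section
/- Let M_{n,k} be the generalized Motzkin numbers obtained from the choices σ_k = 0 (for all k ≥ 0) and τ_k = −k²/4 (for all k ≥ 1). Then for every n ≥ 0, M_{n,0} = E_n/2^n, where E_n is the n-th Euler number. -/
open Finset

noncomputable def cw (m : ℕ) : ℝ := if Even m then (2⁻¹ : ℝ)^m else 0
noncomputable def sw (m : ℕ) : ℝ := if Even m then 0 else (2⁻¹ : ℝ)^m

lemma cw_succ (m : ℕ) : cw (m+1) = 2⁻¹ * sw m := by
  by_cases h : Even m
  · simp [cw, sw, h, Nat.even_add_one, pow_succ]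
  · simp [cw, sw, h, Nat.even_add_one, pow_succ]
    ring
lemma sw_succ (m : ℕ) : sw (m+1) = 2⁻¹ * cw m := by
  by_cases h : Even m
  · simp [cw, sw, h, Nat.even_add_one, pow_succ]
    ring
  · simp [cw, sw, h, Nat.even_add_one, pow_succ]

noncomputable def NN (M : ℕ → ℕ → ℝ) (n k : ℕ) : ℝ :=
  ∑ j ∈ Finset.range (n+1), (n.choose j : ℝ) * cw (n-j) * M j k
noncomputable def PP (M : ℕ → ℕ → ℝ) (n k : ℕ) : ℝ :=
  ∑ j ∈ Finset.range (n+1), (n.choose j : ℝ) * sw (n-j) * M j k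

lemma conv_succ (w g : ℕ → ℝ) (n : ℕ) :
    ∑ j ∈ Finset.range (n+2), ((n+1).choose j : ℝ) * w (n+1-j) * g j =
    ∑ j ∈ Finset.range (n+1), (n.choose j : ℝ) * w (n+1-j) * g j
      + ∑ j ∈ Finset.range (n+1), (n.choose j : ℝ) * w (n-j) * g (j+1) := by
  rw [Finset.sum_range_succ' (fun j => ((n+1).choose j : ℝ) * w (n+1-j) * g j)]
  rw [Finset.sum_range_succ' (fun j => ((n).choose j : ℝ) * w (n+1-j) * g j)]
  have h1 : ∀ j, ((n+1).choose (j+1) : ℝ) = (n.choose j : ℝ) + (n.choose (j+1) : ℝ) := by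
    intro j; exact_mod_cast congrArg (Nat.cast (R := ℝ)) (Nat.choose_succ_succ n j)
  have h2 : ∀ j, n + 1 - (j + 1) = n - j := fun j => by omega
  simp only [h1, h2, Nat.choose_zero_right, Nat.cast_one, add_mul, one_mul]
  rw [Finset.sum_add_distrib]
  have h3 : ∑ j ∈ Finset.range (n+1), (n.choose (j+1) : ℝ) * w (n-j) * g (j+1)
      = ∑ j ∈ Finset.range n, (n.choose (j+1) : ℝ) * w (n-j) * g (j+1) := by
    rw [Finset.sum_range_succ]
    simp
  rw [h3]; ring
section Rec
variable (M : ℕ → ℕ → ℝ)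
  (hM0 : ∀ n : ℕ, M (n + 1) 0 = 0 * M n 0 + (-((1 : ℝ) ^ 2 / 4)) * M n 1)
  (hMk : ∀ n k : ℕ, M (n + 1) (k + 1) =
      M n k + 0 * M n (k + 1) + (-(((k : ℝ) + 2) ^ 2 / 4)) * M n (k + 2))

lemma first_sum_cw (n k : ℕ) :
    ∑ j ∈ Finset.range (n+1), (n.choose j : ℝ) * cw (n+1-j) * M j k
      = 2⁻¹ * PP M n k := by
  rw [PP, Finset.mul_sum]
  refine Finset.sum_congr rfl fun j hj => ?_
  have hle : j ≤ n := Nat.lt_succ_iff.mp (Finset.mem_range.mp hj)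
  have : n + 1 - j = (n - j) + 1 := by omega
  rw [this, cw_succ]; ring

lemma first_sum_sw (n k : ℕ) :
    ∑ j ∈ Finset.range (n+1), (n.choose j : ℝ) * sw (n+1-j) * M j k
      = 2⁻¹ * NN M n k := by
  rw [NN, Finset.mul_sum]
  refine Finset.sum_congr rfl fun j hj => ?_
  have hle : j ≤ n := Nat.lt_succ_iff.mp (Finset.mem_range.mp hj)
  have : n + 1 - j = (n - j) + 1 := by omega
  rw [this, sw_succ]; ring

include hMk in
lemma NrecS (n k : ℕ) :
    NN M (n+1) (k+1) = 2⁻¹ * PP M n (k+1) + NN M n k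
      - ((k:ℝ)+2)^2/4 * NN M n (k+2) := by
  show (∑ j ∈ Finset.range (n+2), ((n+1).choose j : ℝ) * cw (n+1-j) * M j (k+1)) = _
  rw [conv_succ, first_sum_cw]
  have : ∑ j ∈ Finset.range (n+1), (n.choose j : ℝ) * cw (n-j) * M (j+1) (k+1)
      = NN M n k - ((k:ℝ)+2)^2/4 * NN M n (k+2) := by
    rw [NN, NN, Finset.mul_sum, ← Finset.sum_sub_distrib]
    refine Finset.sum_congr rfl fun j hj => ?_
    rw [hMk j k]; ring
  rw [this]; ring

include hM0 in
lemma Nrec0 (n : ℕ) :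
    NN M (n+1) 0 = 2⁻¹ * PP M n 0 - 4⁻¹ * NN M n 1 := by
  show (∑ j ∈ Finset.range (n+2), ((n+1).choose j : ℝ) * cw (n+1-j) * M j 0) = _
  rw [conv_succ, first_sum_cw]
  have : ∑ j ∈ Finset.range (n+1), (n.choose j : ℝ) * cw (n-j) * M (j+1) 0
      = - (4⁻¹ * NN M n 1) := by
    rw [NN, Finset.mul_sum, ← Finset.sum_neg_distrib]
    refine Finset.sum_congr rfl fun j hj => ?_
    rw [hM0 j]; ring
  rw [this]; ring

include hMk in
lemma PrecS (n k : ℕ) :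
    PP M (n+1) (k+1) = 2⁻¹ * NN M n (k+1) + PP M n k
      - ((k:ℝ)+2)^2/4 * PP M n (k+2) := by
  show (∑ j ∈ Finset.range (n+2), ((n+1).choose j : ℝ) * sw (n+1-j) * M j (k+1)) = _
  rw [conv_succ, first_sum_sw]
  have : ∑ j ∈ Finset.range (n+1), (n.choose j : ℝ) * sw (n-j) * M (j+1) (k+1)
      = PP M n k - ((k:ℝ)+2)^2/4 * PP M n (k+2) := by
    rw [PP, PP, Finset.mul_sum, ← Finset.sum_sub_distrib]
    refine Finset.sum_congr rfl fun j hj => ?_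
    rw [hMk j k]; ring
  rw [this]; ring

include hM0 in
lemma Prec0 (n : ℕ) :
    PP M (n+1) 0 = 2⁻¹ * NN M n 0 - 4⁻¹ * PP M n 1 := by
  show (∑ j ∈ Finset.range (n+2), ((n+1).choose j : ℝ) * sw (n+1-j) * M j 0) = _
  rw [conv_succ, first_sum_sw]
  have : ∑ j ∈ Finset.range (n+1), (n.choose j : ℝ) * sw (n-j) * M (j+1) 0
      = - (4⁻¹ * PP M n 1) := by
    rw [PP, Finset.mul_sum, ← Finset.sum_neg_distrib]
    refine Finset.sum_congr rfl fun j hj => ?_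
    rw [hM0 j]; ring
  rw [this]; ring

end Rec

section Key
variable (M : ℕ → ℕ → ℝ)
  (hM00 : M 0 0 = 1)
  (hMhigh : ∀ n k : ℕ, n < k → M n k = 0)
  (hM0 : ∀ n : ℕ, M (n + 1) 0 = 0 * M n 0 + (-((1 : ℝ) ^ 2 / 4)) * M n 1)
  (hMk : ∀ n k : ℕ, M (n + 1) (k + 1) =
      M n k + 0 * M n (k + 1) + (-(((k : ℝ) + 2) ^ 2 / 4)) * M n (k + 2))

include hMhigh hM0 hMk in
lemma keyNP : ∀ n k : ℕ, ((k:ℝ)+1) * NN M n (k+1) = 2 * PP M n k := by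
  intro n
  induction n with
  | zero =>
    intro k
    have h1 : NN M 0 (k+1) = M 0 (k+1) := by simp [NN, cw]
    have h2 : PP M 0 k = 0 := by simp [PP, sw]
    rw [h1, h2, hMhigh 0 (k+1) (Nat.succ_pos k)]; ring
  | succ n ih =>
    intro k
    cases k with
    | zero =>
      rw [NrecS M hMk n 0, Prec0 M hM0 n]
      have h2 := ih 1
      push_cast at h2 ⊢
      try simp only [add_assoc, Nat.reduceAdd] at h2 ⊢
      linear_combination (-2⁻¹ : ℝ) * h2
    | succ k =>
      rw [NrecS M hMk n (k+1), PrecS M hMk n k]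
      have h1 := ih k
      have h2 := ih (k+2)
      push_cast at h1 h2 ⊢
      simp only [add_assoc, Nat.reduceAdd] at h1 h2 ⊢
      linear_combination h1 - ((k:ℝ)+2)*((k:ℝ)+3)/4 * h2

include hM00 hMhigh hM0 hMk in
lemma Nzero : ∀ n : ℕ, NN M n 0 = if n = 0 then 1 else 0 := by
  intro n
  cases n with
  | zero => simp [NN, cw, hM00]
  | succ n =>
    rw [Nrec0 M hM0 n]
    have h := keyNP M hMhigh hM0 hMk n 0
    push_cast at h
    simp only [Nat.succ_ne_zero, if_false]
    linarith

end Key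

lemma denom_ne_zero {z : ℂ} (hz : ‖z‖ < 1) : Complex.exp z + Complex.exp (-z) ≠ 0 := by
  intro h
  have h2 : Complex.exp (2*z) = -1 := by
    have := congrArg (· * Complex.exp z) h
    simp only [add_mul, zero_mul, ← Complex.exp_add] at this
    rw [neg_add_cancel, Complex.exp_zero] at this
    have h2z : (2:ℂ)*z = z + z := by ring
    rw [h2z]
    linear_combination this
  have h4 : Complex.exp (4*z) = 1 := by
    have : (4:ℂ)*z = 2*z + 2*z := by ring
    rw [this, Complex.exp_add, h2]; ring
  obtain ⟨n, hn⟩ := Complex.exp_eq_one_iff.mp h4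
  rcases eq_or_ne n 0 with h0 | h0
  · rw [h0] at hn
    simp at hn
    rw [hn] at h2
    simp [Complex.exp_zero] at h2
    norm_num at h2
  · have hz4 : ‖(4:ℂ)*z‖ < 4 := by
      rw [norm_mul]
      simp only [Complex.norm_ofNat]
      nlinarith [norm_nonneg z]
    rw [hn] at hz4
    have : (4:ℝ) ≤ ‖(n:ℂ) * (2 * Real.pi * Complex.I)‖ := by
      rw [norm_mul, norm_mul, norm_mul]
      simp only [Complex.norm_intCast, Complex.norm_ofNat, Complex.norm_real,
        Complex.norm_I, mul_one, Real.norm_eq_abs]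
      have h1 : (1:ℝ) ≤ |(n:ℝ)| := by
        rw [← Int.cast_abs]
        exact_mod_cast Int.one_le_abs h0
      have hpi : (2:ℝ) ≤ |Real.pi| := by
        rw [abs_of_pos Real.pi_pos]
        nlinarith [Real.pi_gt_three]
      calc (4:ℝ) = 1 * (2 * 2) := by norm_num
      _ ≤ |(n:ℝ)| * (2 * |Real.pi|) := by
          apply mul_le_mul h1 (by nlinarith) (by norm_num) (abs_nonneg _)
    linarith

lemma hasSum_coshlike (z : ℂ) :
    HasSum (fun n : ℕ => (if Even n then (1:ℂ) else 0) * z^n / n.factorial)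
      ((Complex.exp z + Complex.exp (-z))/2) := by
  have h1 : HasSum (fun n : ℕ => z^n / n.factorial) (Complex.exp z) := by
    rw [Complex.exp_eq_exp_ℂ]; exact NormedSpace.expSeries_div_hasSum_exp z
  have h2 : HasSum (fun n : ℕ => (-z)^n / n.factorial) (Complex.exp (-z)) := by
    rw [Complex.exp_eq_exp_ℂ]; exact NormedSpace.expSeries_div_hasSum_exp (-z)
  have := (h1.add h2).div_const 2
  convert this using 2 with n
  case e'_3 => rfl
  by_cases h : Even n
  · rw [if_pos h, h.neg_pow]; ring
  · rw [if_neg h, (Nat.not_even_iff_odd.mp h).neg_pow]; ring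

lemma cauchy_coeff (Eu : ℕ → ℝ) (z : ℂ) (n : ℕ) :
    ∑ k ∈ Finset.range (n+1), (Eu k * z^k / k.factorial) *
      ((if Even (n-k) then (1:ℂ) else 0) * z^(n-k) / (n-k).factorial)
    = (((∑ j ∈ Finset.range (n+1), (n.choose j : ℝ) *
        (if Even (n-j) then (1:ℝ) else 0) * Eu j) / n.factorial : ℝ) : ℂ) * z^n := by
  push_cast
  rw [div_mul_eq_mul_div, Finset.sum_mul, Finset.sum_div]
  refine Finset.sum_congr rfl fun k hk => ?_
  have hk' : k ≤ n := Nat.lt_succ_iff.mp (Finset.mem_range.mp hk)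
  have hzpow : z^k * z^(n-k) = z^n := by
    rw [← pow_add]; congr 1; omega
  have hfact : ((n.choose k : ℂ)) * (k.factorial : ℂ) * ((n-k).factorial : ℂ)
      = (n.factorial : ℂ) := by
    exact_mod_cast congrArg (Nat.cast (R := ℂ)) (Nat.choose_mul_factorial_mul_factorial hk')
  have hk0 : (k.factorial : ℂ) ≠ 0 := Nat.cast_ne_zero.mpr k.factorial_ne_zero
  have hnk0 : ((n-k).factorial : ℂ) ≠ 0 := Nat.cast_ne_zero.mpr (n-k).factorial_ne_zero
  have hn0 : (n.factorial : ℂ) ≠ 0 := Nat.cast_ne_zero.mpr n.factorial_ne_zero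
  have hite : ((if Even (n-k) then ((1:ℝ):ℂ) else ((0:ℝ):ℂ))) = (if Even (n-k) then (1:ℂ) else 0) := by
    split <;> norm_num
  field_simp
  rw [apply_ite Complex.ofReal]
  split
  · push_cast
    rw [← hzpow, ← hfact]
    ring
  · push_cast
    ring

lemma hasSum_A (Eu : ℕ → ℝ)
    (hE : ∀ z : ℂ, ‖z‖ < 1 →
      HasSum (fun n : ℕ => (Eu n : ℂ) * z ^ n / (n.factorial : ℂ))
        (2 / (Complex.exp z + Complex.exp (-z))))
    (z : ℂ) (hz : ‖z‖ < 1) :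
    HasSum (fun n : ℕ => (((∑ j ∈ Finset.range (n+1), (n.choose j : ℝ) *
        (if Even (n-j) then (1:ℝ) else 0) * Eu j) / n.factorial : ℝ) : ℂ) * z^n) 1 := by
  set F : ℕ → ℂ := fun n => (Eu n : ℂ) * z ^ n / (n.factorial : ℂ) with hFdef
  set G : ℕ → ℂ := fun n => (if Even n then (1:ℂ) else 0) * z^n / n.factorial with hGdef
  have hF : HasSum F (2 / (Complex.exp z + Complex.exp (-z))) := hE z hz
  have hG : HasSum G ((Complex.exp z + Complex.exp (-z))/2) := hasSum_coshlike z
  have hFn : Summable fun n => ‖F n‖ := hF.summable.norm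
  have hGn : Summable fun n => ‖G n‖ := hG.summable.norm
  have hprod := tsum_mul_tsum_eq_tsum_sum_range_of_summable_norm hFn hGn
  have hsum : Summable fun n => ∑ k ∈ Finset.range (n+1), F k * G (n-k) :=
    (summable_norm_sum_mul_range_of_summable_norm hFn hGn).of_norm
  rw [hF.tsum_eq, hG.tsum_eq] at hprod
  have hden := denom_ne_zero hz
  have hone : (2 / (Complex.exp z + Complex.exp (-z))) *
      ((Complex.exp z + Complex.exp (-z))/2) = 1 := by
    field_simp
  rw [hone] at hprod
  have hterm : (fun n => ∑ k ∈ Finset.range (n+1), F k * G (n-k))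
      = fun n => (((∑ j ∈ Finset.range (n+1), (n.choose j : ℝ) *
        (if Even (n-j) then (1:ℝ) else 0) * Eu j) / n.factorial : ℝ) : ℂ) * z^n := by
    funext n
    exact cauchy_coeff Eu z n
  rw [hterm] at hprod hsum
  exact hprod ▸ hsum.hasSum

lemma coeff_unique (A : ℕ → ℝ)
    (hA : ∀ z : ℂ, ‖z‖ < 1 → HasSum (fun n => (A n : ℂ) * z^n) 1) :
    ∀ n : ℕ, A n = if n = 0 then 1 else 0 := by
  set p : FormalMultilinearSeries ℂ ℂ ℂ :=
    FormalMultilinearSeries.ofScalars ℂ (fun n => (A n : ℂ)) with hp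
  have hr : 1 ≤ p.radius := by
    apply ENNReal.le_of_forall_nnreal_lt
    intro r hr
    apply p.le_radius_of_summable_norm
    have hz : ‖((r:ℝ):ℂ)‖ < 1 := by
      rw [Complex.norm_real, Real.norm_eq_abs, abs_of_nonneg r.coe_nonneg]
      exact_mod_cast hr
    have hs := (hA _ hz).summable.norm
    have : (fun n => ‖p n‖ * (r:ℝ)^n) = fun n => ‖(A n : ℂ) * ((r:ℝ):ℂ)^n‖ := by
      funext n
      rw [hp, FormalMultilinearSeries.ofScalars_norm, norm_mul, norm_pow,
        Complex.norm_real, Complex.norm_real, NNReal.norm_eq]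
    rw [this]
    exact hs
  have hball : HasFPowerSeriesOnBall (fun _ : ℂ => (1:ℂ)) p 0 1 := by
    refine ⟨hr, one_pos, ?_⟩
    intro y hy
    have hy' : ‖y‖ < 1 := by
      simpa [edist_zero_right, ← ENNReal.coe_one, ENNReal.coe_lt_coe,
        ← NNReal.coe_lt_coe] using hy
    have := hA y hy'
    simp only [FormalMultilinearSeries.ofScalars_apply_eq, smul_eq_mul, hp]
    simpa using this
  have heq : p = constFormalMultilinearSeries ℂ ℂ (1:ℂ) :=
    hball.hasFPowerSeriesAt.eq_formalMultilinearSeries hasFPowerSeriesAt_const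
  intro n
  have hn := congrFun heq n
  have happ := congrArg (fun (q : ℂ [×n]→L[ℂ] ℂ) => q (fun _ => (1:ℂ))) hn
  simp only [FormalMultilinearSeries.ofScalars_apply_eq, smul_eq_mul, one_pow, mul_one, hp]
    at happ
  cases n with
  | zero =>
    simp only [constFormalMultilinearSeries] at happ
    rw [ContinuousMultilinearMap.uncurry0_apply] at happ
    rw [if_pos rfl]
    exact_mod_cast happ
  | succ m =>
    simp only [constFormalMultilinearSeries_apply_of_nonzero (Nat.succ_ne_zero m),
      ContinuousMultilinearMap.zero_apply] at happ
    simp only [Nat.succ_ne_zero, if_false]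
    exact_mod_cast happ

lemma euler_sum (Eu : ℕ → ℝ)
    (hE : ∀ z : ℂ, ‖z‖ < 1 →
      HasSum (fun n : ℕ => (Eu n : ℂ) * z ^ n / (n.factorial : ℂ))
        (2 / (Complex.exp z + Complex.exp (-z)))) :
    ∀ n : ℕ, ∑ j ∈ Finset.range (n+1), (n.choose j : ℝ) *
        (if Even (n-j) then (1:ℝ) else 0) * Eu j = if n = 0 then 1 else 0 := by
  intro n
  have h := coeff_unique
    (fun n => (∑ j ∈ Finset.range (n+1), (n.choose j : ℝ) *
        (if Even (n-j) then (1:ℝ) else 0) * Eu j) / n.factorial)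
    (fun z hz => by exact_mod_cast hasSum_A Eu hE z hz) n
  have hn0 : (n.factorial : ℝ) ≠ 0 := Nat.cast_ne_zero.mpr n.factorial_ne_zero
  rw [div_eq_iff hn0] at h
  rw [h]
  cases n with
  | zero => norm_num
  | succ m => simp


/-- the generalized Motzkin numbers built from `σ_k = 0` and
`τ_k = -k²/4` satisfy `M_{n,0} = E_n / 2^n`, where `E_n` are the Euler numbers
(EGF `sech z`).
The Motzkin recurrence `M_{n+1,k} = M_{n,k-1} + σ_k M_{n,k} + τ_{k+1} M_{n,k+1}`
(with `M_{n,k} = 0` for `k < 0` or `k > n`) is encoded with natural-number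
indices: the `k = 0` case drops the `M_{n,-1}` term. -/
theorem stmt_15
    (E : ℕ → ℝ)
    (hE : ∀ z : ℂ, ‖z‖ < 1 →
      HasSum (fun n : ℕ => (E n : ℂ) * z ^ n / (n.factorial : ℂ))
        (2 / (Complex.exp z + Complex.exp (-z))))
    (M : ℕ → ℕ → ℝ)
    (hM00 : M 0 0 = 1)
    (hMhigh : ∀ n k : ℕ, n < k → M n k = 0)
    (hM0 : ∀ n : ℕ, M (n + 1) 0 =
      0 * M n 0 + (-((1 : ℝ) ^ 2 / 4)) * M n 1)
    (hMk : ∀ n k : ℕ, M (n + 1) (k + 1) =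
      M n k + 0 * M n (k + 1) + (-(((k : ℝ) + 2) ^ 2 / 4)) * M n (k + 2)) :
    ∀ n : ℕ, M n 0 = E n / 2 ^ n := by
  intro n
  induction n using Nat.strong_induction_on with
  | _ n ih =>
  have hN := Nzero M hM00 hMhigh hM0 hMk n
  have hEid := euler_sum E hE n
  rw [NN, Finset.sum_range_succ] at hN
  rw [Finset.sum_range_succ] at hEid
  simp only [Nat.choose_self, Nat.cast_one, one_mul, Nat.sub_self] at hN hEid
  have hcw0 : cw 0 = 1 := by simp [cw]
  rw [hcw0, one_mul] at hN
  rw [if_pos (Even.zero), one_mul] at hEid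
  have hsum : ∑ j ∈ Finset.range n, (n.choose j : ℝ) * cw (n-j) * M j 0
      = (2⁻¹:ℝ)^n * ∑ j ∈ Finset.range n, (n.choose j : ℝ) *
          (if Even (n-j) then (1:ℝ) else 0) * E j := by
    rw [Finset.mul_sum]
    refine Finset.sum_congr rfl fun j hj => ?_
    have hj' : j < n := Finset.mem_range.mp hj
    rw [ih j hj']
    have hcw : cw (n-j) = (if Even (n-j) then (1:ℝ) else 0) * (2⁻¹:ℝ)^(n-j) := by
      unfold cw; split <;> ring
    have hpow : (2⁻¹:ℝ)^(n-j) * ((2:ℝ)^j)⁻¹ = (2⁻¹:ℝ)^n := by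
      rw [← inv_pow, ← pow_add]
      congr 1
      omega
    rw [hcw, div_eq_mul_inv, ← hpow]
    ring
  rw [div_eq_mul_inv, ← inv_pow]
  rcases eq_or_ne n 0 with h0 | h0
  · subst h0
    simp only [if_pos rfl, Finset.range_zero, Finset.sum_empty, zero_add] at hN hEid
    rw [hN, hEid]
    norm_num
  · rw [if_neg h0] at hN hEid
    linear_combination hN - hsum - (2⁻¹:ℝ)^n * hEid
end

section
/- Fix an integer p ≥ 1 and a real number x, and let L^(p) be the linear functional on real polynomials in y determined by L^(p)(y^k) = B_k^(p)(x), where B_n^(p)(x) are the higher-order Bernoulli polynomials. Suppose (P_n)_{n≥0} are monic real polynomials with P_0 = 1, P_1(y) = y − a_0, P_{n+1}(y) = (y − a_n)P_n(y) − b_n P_{n−1}(y) for n ≥ 1, satisfying the orthogonality L^(p)(y^r P_n(y)) = 0 for all 0 ≤ r < n, and the nondegeneracy condition L^(p)(y^n P_n(y)) ≠ 0 for all n. Then a_n = x − p/2 for every n ≥ 0. -/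
open Polynomial Finset
open scoped NNReal ENNReal

lemma aux_exp_ne_one {z : ℂ} (hz : z ≠ 0) (h1 : ‖z‖ < 1) : Complex.exp z ≠ 1 := by
  intro h
  rw [Complex.exp_eq_one_iff] at h
  obtain ⟨n, hn⟩ := h
  rcases eq_or_ne n 0 with rfl | hn0
  · simp at hn; exact hz hn
  · have h2 : ‖z‖ = |(n:ℝ)| * (2 * Real.pi) := by
      rw [hn]
      rw [norm_mul, norm_mul, norm_mul]
      simp [Complex.norm_intCast, Complex.norm_real, abs_of_pos Real.pi_pos]
    have h3 : (1:ℝ) ≤ |(n:ℝ)| := by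
      rw [← Int.cast_abs]
      exact_mod_cast Int.one_le_abs hn0
    have h4 : (2:ℝ) * Real.pi ≥ 2 * 3 := by nlinarith [Real.pi_gt_three]
    nlinarith

lemma aux_even (p : ℕ) {z : ℂ} (hz : z ≠ 0) (h1 : ‖z‖ < 1) :
    ((-z) / (Complex.exp (-z) - 1)) ^ p * Complex.exp ((p:ℂ)/2 * (-z))
      = (z / (Complex.exp z - 1)) ^ p * Complex.exp ((p:ℂ)/2 * z) := by
  have he : Complex.exp z - 1 ≠ 0 := sub_ne_zero.mpr (aux_exp_ne_one hz h1)
  have he' : Complex.exp (-z) - 1 ≠ 0 :=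
    sub_ne_zero.mpr (aux_exp_ne_one (neg_ne_zero.mpr hz) (by simpa using h1))
  have hez : Complex.exp z ≠ 0 := Complex.exp_ne_zero z
  have key : (-z) / (Complex.exp (-z) - 1) = z * Complex.exp z / (Complex.exp z - 1) := by
    rw [div_eq_div_iff he' he, Complex.exp_neg]
    field_simp
    ring
  rw [key, mul_div_right_comm, mul_pow, ← Complex.exp_nat_mul, mul_assoc, ← Complex.exp_add]
  congr 1
  ring

lemma aux_cauchy (μ B : ℕ → ℝ) (cc : ℝ) {S : ℂ}
    (hμ : ∀ n, μ n = ∑ m ∈ Finset.range (n+1), (n.choose m : ℝ) * B m * (-cc)^(n-m))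
    {z : ℂ} (hz : HasSum (fun n : ℕ => (B n : ℂ) * z ^ n / (n.factorial : ℂ)) S) :
    HasSum (fun n : ℕ => (μ n : ℂ) * z ^ n / (n.factorial : ℂ))
      (S * Complex.exp (-(cc:ℂ) * z)) := by
  have hg : HasSum (fun n : ℕ => (-(cc:ℂ) * z) ^ n / (n.factorial : ℂ))
      (Complex.exp (-(cc:ℂ) * z)) := by
    rw [Complex.exp_eq_exp_ℂ]
    exact NormedSpace.expSeries_div_hasSum_exp (-(cc:ℂ) * z)
  have hfn : Summable (fun n : ℕ => ‖(B n : ℂ) * z ^ n / (n.factorial : ℂ)‖) :=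
    hz.summable.norm
  have hgn : Summable (fun n : ℕ => ‖(-(cc:ℂ) * z) ^ n / (n.factorial : ℂ)‖) :=
    hg.summable.norm
  have htsum := tsum_mul_tsum_eq_tsum_sum_antidiagonal_of_summable_norm hfn hgn
  have hsummable :=
    (summable_norm_sum_mul_antidiagonal_of_summable_norm hfn hgn).of_norm
  have termeq : ∀ n : ℕ,
      (∑ kl ∈ Finset.HasAntidiagonal.antidiagonal n,
        ((B kl.1 : ℂ) * z ^ kl.1 / (kl.1.factorial : ℂ)) *
          ((-(cc:ℂ) * z) ^ kl.2 / (kl.2.factorial : ℂ)))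
        = (μ n : ℂ) * z ^ n / (n.factorial : ℂ) := by
    intro n
    rw [Finset.Nat.sum_antidiagonal_eq_sum_range_succ
      (f := fun k l => ((B k : ℂ) * z ^ k / (k.factorial : ℂ)) *
          ((-(cc:ℂ) * z) ^ l / (l.factorial : ℂ)))]
    have hcast : (μ n : ℂ)
        = ∑ m ∈ Finset.range (n+1), (n.choose m : ℂ) * (B m : ℂ) * (-(cc:ℂ))^(n-m) := by
      rw [hμ n]
      push_cast
      exact Finset.sum_congr rfl fun m _ => by ring
    rw [hcast, Finset.sum_mul, Finset.sum_div]
    refine Finset.sum_congr rfl fun m hm => ?_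
    have hmn : m ≤ n := Nat.lt_succ_iff.mp (Finset.mem_range.mp hm)
    rw [Nat.cast_choose ℂ hmn, mul_pow]
    have hz2 : z ^ m * z ^ (n - m) = z ^ n := by
      rw [← pow_add, Nat.add_sub_cancel' hmn]
    have hf1 : ((m.factorial : ℂ)) ≠ 0 := Nat.cast_ne_zero.mpr m.factorial_ne_zero
    have hf2 : (((n-m).factorial : ℂ)) ≠ 0 := Nat.cast_ne_zero.mpr (n-m).factorial_ne_zero
    have hf3 : ((n.factorial : ℂ)) ≠ 0 := Nat.cast_ne_zero.mpr n.factorial_ne_zero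
    field_simp
    rw [← hz2]
    ring
  have h2 : HasSum (fun n : ℕ =>
      ∑ kl ∈ Finset.HasAntidiagonal.antidiagonal n,
        ((B kl.1 : ℂ) * z ^ kl.1 / (kl.1.factorial : ℂ)) *
          ((-(cc:ℂ) * z) ^ kl.2 / (kl.2.factorial : ℂ)))
      (∑' n : ℕ, ∑ kl ∈ Finset.HasAntidiagonal.antidiagonal n,
        ((B kl.1 : ℂ) * z ^ kl.1 / (kl.1.factorial : ℂ)) *
          ((-(cc:ℂ) * z) ^ kl.2 / (kl.2.factorial : ℂ))) := hsummable.hasSum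
  rw [← htsum, hz.tsum_eq, hg.tsum_eq] at h2
  exact (funext termeq : _) ▸ h2

lemma aux_mu (L : Polynomial ℝ →ₗ[ℝ] ℝ) (B : ℕ → ℝ) (hL : ∀ k : ℕ, L (X ^ k) = B k)
    (cc : ℝ) (n : ℕ) :
    L ((X - C cc)^n) = ∑ m ∈ Finset.range (n+1), (n.choose m : ℝ) * B m * (-cc)^(n-m) := by
  have hexp : (X - C cc : Polynomial ℝ)^n
      = ∑ m ∈ Finset.range (n+1), ((-cc)^(n-m) * (n.choose m : ℝ)) • X^m := by
    rw [sub_eq_add_neg, add_pow]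
    refine Finset.sum_congr rfl fun m hm => ?_
    rw [smul_eq_C_mul, ← C_neg, ← C_pow]
    rw [C_mul]
    rw [← Polynomial.C_eq_natCast]
    ring
  rw [hexp, map_sum]
  refine Finset.sum_congr rfl fun m hm => ?_
  rw [map_smul, hL, smul_eq_mul]
  ring

private lemma hasSum_congr' {f g : ℕ → ℂ} {a : ℂ} (h : ∀ n, f n = g n) (hf : HasSum f a) :
    HasSum g a := (funext h : f = g) ▸ hf

lemma aux_hodd (p : ℕ) (x : ℝ) (B : ℕ → ℝ)
    (hB : ∀ z : ℂ, z ≠ 0 → ‖z‖ < 1 →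
      HasSum (fun n : ℕ => (B n : ℂ) * z ^ n / (n.factorial : ℂ))
        ((z / (Complex.exp z - 1)) ^ p * Complex.exp (x * z)))
    (L : Polynomial ℝ →ₗ[ℝ] ℝ)
    (hL : ∀ k : ℕ, L (X ^ k) = B k) :
    ∀ m : ℕ, Odd m → L ((X - C (x - (p:ℝ)/2))^m) = 0 := by
  set cc : ℝ := x - (p:ℝ)/2 with hcc
  set μ : ℕ → ℝ := fun n => L ((X - C cc)^n) with hμdef
  have hμ : ∀ n, μ n = ∑ m ∈ Finset.range (n+1), (n.choose m : ℝ) * B m * (-cc)^(n-m) :=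
    fun n => aux_mu L B hL cc n
  have key : ∀ z : ℂ, z ≠ 0 → ‖z‖ < 1 →
      HasSum (fun n : ℕ => (μ n : ℂ) * z ^ n / (n.factorial : ℂ))
        ((z / (Complex.exp z - 1)) ^ p * Complex.exp ((p:ℂ)/2 * z)) := by
    intro z hz h1
    have h := aux_cauchy μ B cc hμ (hB z hz h1)
    have heq : (z / (Complex.exp z - 1)) ^ p * Complex.exp ((x:ℝ) * z) * Complex.exp (-(cc:ℂ) * z)
        = (z / (Complex.exp z - 1)) ^ p * Complex.exp ((p:ℂ)/2 * z) := by
      rw [mul_assoc, ← Complex.exp_add]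
      congr 2
      have h2 : (cc:ℂ) = (x:ℂ) - (p:ℂ)/2 := by rw [hcc]; push_cast; ring
      rw [h2]; push_cast; ring
    rwa [heq] at h
  set μ' : ℕ → ℝ := fun n => μ n - (-1)^n * μ n with hμ'def
  have keyd : ∀ z : ℂ, ‖z‖ < 1/2 →
      HasSum (fun n : ℕ => (μ' n : ℂ) * z ^ n / (n.factorial : ℂ)) 0 := by
    intro z h12
    rcases eq_or_ne z 0 with rfl | hz
    · have h0 : (fun n : ℕ => (μ' n : ℂ) * (0:ℂ) ^ n / (n.factorial : ℂ)) = fun _ => 0 := by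
        funext n
        cases n with
        | zero => simp [hμ'def]
        | succ k => simp
      rw [h0]; exact hasSum_zero
    · have h1 : ‖z‖ < 1 := h12.trans (by norm_num)
      have ha := key z hz h1
      have hb := key (-z) (neg_ne_zero.mpr hz) (by simpa using h1)
      rw [aux_even p hz h1] at hb
      have hb' : HasSum (fun n : ℕ => ((-1:ℂ))^n * ((μ n : ℂ) * z ^ n / (n.factorial : ℂ)))
          ((z / (Complex.exp z - 1)) ^ p * Complex.exp ((p:ℂ)/2 * z)) := by
        refine hasSum_congr' (fun n => ?_) hb
        rw [neg_pow]; ring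
      have hd := ha.sub hb'
      rw [sub_self] at hd
      refine hasSum_congr' (fun n => ?_) hd
      push_cast [hμ'def]
      ring
  set d : ℕ → ℂ := fun n => (μ' n : ℂ) / (n.factorial : ℂ) with hddef
  set q : FormalMultilinearSeries ℂ ℂ ℂ := FormalMultilinearSeries.ofScalars ℂ d with hqdef
  have hq : HasFPowerSeriesOnBall (fun _ : ℂ => (0:ℂ)) q 0 ((1/4 : ℝ≥0) : ℝ≥0∞) := by
    constructor
    · apply FormalMultilinearSeries.le_radius_of_summable
      have hs := (keyd (((1:ℝ)/4 : ℝ) : ℂ) (by rw [Complex.norm_real]; norm_num)).summable.norm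
      refine hs.congr fun n => ?_
      rw [FormalMultilinearSeries.ofScalars_norm]
      have h3 : (μ' n : ℂ) * (((1:ℝ)/4 : ℝ) : ℂ) ^ n / (n.factorial : ℂ)
          = d n * (((1:ℝ)/4 : ℝ) : ℂ) ^ n := by rw [hddef]; ring
      rw [h3, norm_mul, norm_pow, Complex.norm_real]
      norm_num
    · norm_num
    · intro y hy
      rw [mem_emetric_ball_zero_iff, enorm_eq_nnnorm, ENNReal.coe_lt_coe] at hy
      have hy' : ‖y‖ < 1/2 := by
        have h4 := (NNReal.coe_lt_coe).mpr hy
        rw [coe_nnnorm] at h4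
        refine lt_trans h4 ?_
        norm_num
      have h5 := keyd y hy'
      refine hasSum_congr' (fun n => ?_) h5
      rw [hqdef, FormalMultilinearSeries.ofScalars_apply_eq, hddef, smul_eq_mul]
      ring
  have hq0 : q = 0 := hq.hasFPowerSeriesAt.eq_zero
  have hd0 : ∀ n, d n = 0 := by
    intro n
    have : q n = 0 := by rw [hq0]; rfl
    rwa [hqdef, FormalMultilinearSeries.ofScalars_eq_zero] at this
  intro m hm
  have h6 : (μ' m : ℂ) = 0 := by
    have := hd0 m
    rw [hddef] at this
    rcases div_eq_zero_iff.mp this with h | h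
    · exact h
    · exact absurd h (Nat.cast_ne_zero.mpr m.factorial_ne_zero)
  have h7 : μ' m = 0 := by exact_mod_cast h6
  have h8 : μ' m = 2 * μ m := by
    rw [hμ'def]
    simp only
    rw [Odd.neg_one_pow hm]
    ring
  have : μ m = 0 := by linarith [h8 ▸ h7]
  exact this

lemma aux_orth_gen (L : Polynomial ℝ →ₗ[ℝ] ℝ) (P : ℕ → Polynomial ℝ)
    (horth : ∀ r n : ℕ, r < n → L (X ^ r * P n) = 0) :
    ∀ (n : ℕ) (q : Polynomial ℝ), q.natDegree < n → L (q * P n) = 0 := by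
  intro n q hq
  conv_lhs => rw [q.as_sum_range' n hq]
  rw [Finset.sum_mul, map_sum]
  refine Finset.sum_eq_zero fun i hi => ?_
  rw [← C_mul_X_pow_eq_monomial, mul_assoc, ← smul_eq_C_mul, map_smul,
    horth i n (Finset.mem_range.mp hi), smul_eq_mul, mul_zero]

lemma aux_unique (L : Polynomial ℝ →ₗ[ℝ] ℝ) (P : ℕ → Polynomial ℝ)
    (hmonic : ∀ n : ℕ, (P n).Monic ∧ (P n).natDegree = n)
    (horth : ∀ r n : ℕ, r < n → L (X ^ r * P n) = 0)
    (hnondeg : ∀ n : ℕ, L (X ^ n * P n) ≠ 0) :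
    ∀ d : ℕ, ∀ D : Polynomial ℝ, D.natDegree ≤ d →
      (∀ r : ℕ, r ≤ d → L (X ^ r * D) = 0) → D = 0 := by
  intro d
  induction d using Nat.strong_induction_on with
  | _ d IH =>
    intro D hdeg hvan
    by_contra hD
    set e := D.natDegree with he
    set lc := D.leadingCoeff with hlc
    have hlc0 : lc ≠ 0 := leadingCoeff_ne_zero.mpr hD
    have hmon := (hmonic e).1
    have hdegP : (P e).natDegree = e := (hmonic e).2
    set D' : Polynomial ℝ := D - C lc * P e with hD'
    have hPne : P e ≠ 0 := hmon.ne_zero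
    have hdlt : D'.degree < D.degree := by
      apply degree_sub_lt ?_ hD ?_
      · rw [degree_C_mul hlc0, degree_eq_natDegree hD, degree_eq_natDegree hPne, hdegP]
      · rw [leadingCoeff_mul, leadingCoeff_C, hmon.leadingCoeff, mul_one]
    have hcase : D' = 0 ∨ D'.natDegree < e := by
      rcases eq_or_ne D' 0 with h | h
      · exact Or.inl h
      · exact Or.inr (natDegree_lt_natDegree h hdlt)
    have hD'0 : D' = 0 := by
      rcases hcase with h | h
      · exact h
      · refine IH D'.natDegree (lt_of_lt_of_le h hdeg) D' le_rfl fun r hr => ?_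
        have hre : r < e := lt_of_le_of_lt hr h
        rw [hD', mul_sub, map_sub, hvan r (le_trans hre.le hdeg),
          mul_left_comm, ← smul_eq_C_mul, map_smul, horth r e hre, smul_eq_mul,
          mul_zero, sub_zero]
    have hDe : D = C lc * P e := by
      have := sub_eq_zero.mp hD'0
      exact this
    have hfin := hvan e hdeg
    rw [hDe, mul_left_comm, ← smul_eq_C_mul, map_smul, smul_eq_mul] at hfin
    exact hnondeg e (by
      rcases mul_eq_zero.mp hfin with h | h
      · exact absurd h hlc0
      · exact h)

lemma aux_sym (L : Polynomial ℝ →ₗ[ℝ] ℝ) (c : ℝ)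
    (hodd : ∀ m : ℕ, Odd m → L ((X - C c)^m) = 0) :
    ∀ q : Polynomial ℝ, L (q.comp (C (2*c) - X)) = L q := by
  have hk : ∀ k : ℕ, L ((C (2*c) - X)^k) = L (X^k) := by
    intro k
    have hterm : ∀ (t : ℝ) (m : ℕ),
        L ((C t * (X - C c)^m) * (C c)^(k-m) * ((k.choose m : ℕ) : Polynomial ℝ))
          = (t * c^(k-m) * (k.choose m : ℝ)) * L ((X - C c)^m) := by
      intro t m
      have h1 : (C t * (X - C c)^m) * (C c)^(k-m) * ((k.choose m : ℕ) : Polynomial ℝ)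
          = (t * c^(k-m) * (k.choose m : ℝ)) • (X - C c)^m := by
        rw [smul_eq_C_mul, C_mul, C_mul, ← C_pow, ← C_eq_natCast]
        ring
      rw [h1, map_smul, smul_eq_mul]
    have e1 : (X : Polynomial ℝ)^k = ((X - C c) + C c)^k := by ring
    have e2 : (C (2*c) - X : Polynomial ℝ)^k = ((-(X - C c)) + C c)^k := by
      rw [show ((2:ℝ)*c) = c + c by ring, C_add]; ring
    rw [e1, e2, add_pow, add_pow, map_sum, map_sum]
    refine Finset.sum_congr rfl fun m hm => ?_
    have l1 : (-(X - C c) : Polynomial ℝ)^m = C ((-1:ℝ)^m) * (X - C c)^m := by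
      rw [neg_pow, ← C_1, ← C_neg, ← C_pow]
    have l2 : ((X - C c) : Polynomial ℝ)^m = C (1:ℝ) * (X - C c)^m := by rw [C_1, one_mul]
    rw [l1]
    conv_rhs => rw [l2]
    rw [hterm, hterm]
    rcases Nat.even_or_odd m with he | ho
    · rw [he.neg_one_pow]
    · rw [hodd m ho, mul_zero, mul_zero]
  intro q
  induction q using Polynomial.induction_on' with
  | add r s hr hs => rw [add_comp, map_add, map_add, hr, hs]
  | monomial i t =>
    rw [← C_mul_X_pow_eq_monomial, mul_comp, C_comp, X_pow_comp,
      ← smul_eq_C_mul, ← smul_eq_C_mul, map_smul, map_smul, hk]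

lemma aux_refl (L : Polynomial ℝ →ₗ[ℝ] ℝ) (P : ℕ → Polynomial ℝ) (c : ℝ)
    (hmonic : ∀ n : ℕ, (P n).Monic ∧ (P n).natDegree = n)
    (horth : ∀ r n : ℕ, r < n → L (X ^ r * P n) = 0)
    (hnondeg : ∀ n : ℕ, L (X ^ n * P n) ≠ 0)
    (hsymL : ∀ q : Polynomial ℝ, L (q.comp (C (2*c) - X)) = L q) :
    ∀ n : ℕ, (P n).comp (C (2*c) - X) = ((-1:ℝ)^n) • P n := by
  set σ : Polynomial ℝ := C (2*c) - X with hσ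
  have hσeq : σ = -(X - C (2*c)) := by rw [hσ]; ring
  have hσdeg : σ.natDegree = 1 := by rw [hσeq, natDegree_neg, natDegree_X_sub_C]
  have hσlead : σ.leadingCoeff = -1 := by
    rw [hσeq, leadingCoeff_neg, (monic_X_sub_C (2*c)).leadingCoeff]
  have hσσ : σ.comp σ = X := by rw [hσ, sub_comp, C_comp, X_comp]; ring
  intro n
  have hmon := (hmonic n).1
  have hdeg := (hmonic n).2
  have hcompdeg : ((P n).comp σ).natDegree = n := by
    rw [natDegree_comp, hσdeg, hdeg, mul_one]
  have hcomplead : ((P n).comp σ).leadingCoeff = (-1:ℝ)^n := by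
    rw [leadingCoeff_comp (by rw [hσdeg]; norm_num), hσlead, hmon.leadingCoeff, hdeg, one_mul]
  set E : Polynomial ℝ := ((-1:ℝ)^n) • (P n).comp σ with hE
  have hne : ((-1:ℝ)^n) ≠ 0 := pow_ne_zero _ (by norm_num)
  have hE' : E = C ((-1:ℝ)^n) * (P n).comp σ := by rw [hE, smul_eq_C_mul]
  have hEdeg : E.natDegree = n := by rw [hE', natDegree_C_mul hne, hcompdeg]
  have hElead : E.leadingCoeff = 1 := by
    rw [hE', leadingCoeff_mul, leadingCoeff_C, hcomplead, ← mul_pow]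
    norm_num
  have hEmonic : E.Monic := hElead
  have hEorth : ∀ r : ℕ, r < n → L (X ^ r * E) = 0 := by
    intro r hr
    rw [hE, mul_smul_comm, map_smul, smul_eq_mul]
    have h2 : L (X ^ r * (P n).comp σ) = L (σ ^ r * P n) := by
      rw [← hsymL (X ^ r * (P n).comp σ), mul_comp, X_pow_comp, comp_assoc, hσσ, comp_X]
    rw [h2, aux_orth_gen L P horth n (σ ^ r)
      (by rw [natDegree_pow, hσdeg, mul_one]; exact hr), mul_zero]
  have hPE : P n = E := by
    rcases Nat.eq_zero_or_pos n with rfl | hn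
    · have h1 : P 0 = 1 := hmon.natDegree_eq_zero.mp hdeg
      have h2 : E = 1 := hEmonic.natDegree_eq_zero.mp hEdeg
      rw [h1, h2]
    · rcases eq_or_ne (P n - E) 0 with h | h
      · exact sub_eq_zero.mp h
      exfalso
      apply h
      refine aux_unique L P hmonic horth hnondeg (n-1) _ ?_ ?_
      · have hlt : (P n - E).degree < (P n).degree := by
          apply degree_sub_lt ?_ hmon.ne_zero ?_
          · rw [degree_eq_natDegree hmon.ne_zero, degree_eq_natDegree hEmonic.ne_zero,
              hdeg, hEdeg]
          · rw [hmon.leadingCoeff, hElead]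
        have := natDegree_lt_natDegree h hlt
        omega
      · intro r hr
        have hrn : r < n := by omega
        rw [mul_sub, map_sub, horth r n hrn, hEorth r hrn, sub_zero]
  rw [hE] at hPE
  have := congrArg (fun q => ((-1:ℝ)^n) • q) hPE
  simp only [smul_smul, ← mul_pow] at this
  norm_num at this
  exact this.symm

/-- if `(P_n)` are the monic orthogonal polynomials with respect
to the higher-order Bernoulli polynomial moments `B_k^(p)(x)` (EGF
`(z/(e^z-1))^p e^{xz} = Σ B_n^(p)(x) z^n/n!`), with three-term recurrence
coefficients `a_n, b_n` and nondegeneracy `L^(p)(y^n P_n) ≠ 0`, then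
`a_n = x - p/2` for every `n`. -/
theorem stmt_18 (p : ℕ) (hp : 1 ≤ p) (x : ℝ)
    (B : ℕ → ℝ)
    (hB : ∀ z : ℂ, z ≠ 0 → ‖z‖ < 1 →
      HasSum (fun n : ℕ => (B n : ℂ) * z ^ n / (n.factorial : ℂ))
        ((z / (Complex.exp z - 1)) ^ p * Complex.exp (x * z)))
    (L : Polynomial ℝ →ₗ[ℝ] ℝ)
    (hL : ∀ k : ℕ, L (X ^ k) = B k)
    (a b : ℕ → ℝ)
    (P : ℕ → Polynomial ℝ)
    (hmonic : ∀ n : ℕ, (P n).Monic ∧ (P n).natDegree = n)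
    (hP0 : P 0 = 1)
    (hP1 : P 1 = X - C (a 0))
    (hPrec : ∀ n : ℕ, 1 ≤ n →
      P (n + 1) = (X - C (a n)) * P n - C (b n) * P (n - 1))
    (horth : ∀ r n : ℕ, r < n → L (X ^ r * P n) = 0)
    (hnondeg : ∀ n : ℕ, L (X ^ n * P n) ≠ 0) :
    ∀ n : ℕ, a n = x - (p : ℝ) / 2 := by
  set c : ℝ := x - (p:ℝ)/2 with hc
  have hodd : ∀ m : ℕ, Odd m → L ((X - C c)^m) = 0 := aux_hodd p x B hB L hL
  have hsymL := aux_sym L c hodd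
  have hrefl := aux_refl L P c hmonic horth hnondeg hsymL
  set σ : Polynomial ℝ := C (2*c) - X with hσ
  intro n
  rcases n with _ | m
  · have h1 := hrefl 1
    rw [hP1] at h1
    rw [sub_comp, X_comp, C_comp] at h1
    have h2 := congrArg (fun q => q.coeff 0) h1
    simp only [hσ, pow_one, neg_smul, one_smul, coeff_sub, coeff_neg, coeff_C_zero,
      coeff_X_zero] at h2
    linarith
  · have hrec := hPrec (m+1) (by omega)
    simp only [Nat.add_sub_cancel] at hrec
    have hcomp := congrArg (fun q => q.comp σ) hrec
    simp only [sub_comp, mul_comp, X_comp, C_comp] at hcomp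
    rw [hrefl (m+1+1), hrefl (m+1), hrefl m] at hcomp
    have hkey : C (a (m+1) - (2*c - a (m+1))) * P (m+1) = 0 := by
      have hC : C (a (m+1) - (2*c - a (m+1)))
          = Polynomial.C (a (m+1)) - (Polynomial.C (2*c) - Polynomial.C (a (m+1))) := by
        rw [map_sub, map_sub]
      rw [hC]
      rw [hσ] at hcomp
      rcases Nat.even_or_odd m with hev | hod
      · have s1 : (-1:ℝ)^m = 1 := hev.neg_one_pow
        have s2 : (-1:ℝ)^(m+1) = -1 := by rw [pow_succ, s1]; ring
        have s3 : (-1:ℝ)^(m+1+1) = 1 := by rw [pow_succ, s2]; ring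
        rw [s1, s2, s3] at hcomp
        simp only [one_smul, neg_smul] at hcomp
        linear_combination hrec - hcomp
      · have s1 : (-1:ℝ)^m = -1 := hod.neg_one_pow
        have s2 : (-1:ℝ)^(m+1) = 1 := by rw [pow_succ, s1]; ring
        have s3 : (-1:ℝ)^(m+1+1) = -1 := by rw [pow_succ, s2]; ring
        rw [s1, s2, s3] at hcomp
        simp only [one_smul, neg_smul] at hcomp
        linear_combination hcomp + hrec
    rcases mul_eq_zero.mp hkey with h | h
    · have := (C_eq_zero (a := a (m+1) - (2*c - a (m+1)))).mp h
      linarith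
    · exact absurd h (hmonic (m+1)).1.ne_zero
end
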